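/- For an affine permutation ω on n letters and indices 1 ≤ i < j ≤ n, define k_{i,j}(ω) = |⌊(ω^{-1}(j) − ω^{-1}(i))/n⌋|. Then the total number of affine inversions of ω (pairs (a,b) ∈ [n] × ℕ with a < b and ω(a) > ω(b)) equals ∑_{i<j} k_{i,j}(ω). -/

import Mathlib

/-- The affine symmetric group on `n` letters: bijections `ω : ℤ → ℤ` with
`ω(i+n) = ω(i) + n` for all `i` and `ω(1) + ⋯ + ω(n) = n(n+1)/2`. -/
structure AffinePerm (n : ℕ) where
  toFun : ℤ → ℤ
  bijective : Function.Bijective toFun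
  shift : ∀ i : ℤ, toFun (i + n) = toFun i + n
  sum_window : ∑ i ∈ Finset.Icc (1 : ℤ) (n : ℤ), toFun i = n * (n + 1) / 2

namespace Stmt14Aux

lemma shiftk {n : ℕ} (ω : AffinePerm n) (t k : ℤ) :
    ω.toFun (t + k * n) = ω.toFun t + k * n := by
  induction k using Int.induction_on with
  | zero => simp
  | succ k ih =>
      have h := ω.shift (t + (k : ℤ) * n)
      have e : t + ((k : ℤ) + 1) * n = t + (k : ℤ) * n + n := by ring
      rw [e, h, ih]; ring
  | pred k ih =>
      have h := ω.shift (t + (-(k : ℤ) - 1) * n)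
      have e : t + (-(k : ℤ) - 1) * n + n = t + (-(k : ℤ)) * n := by ring
      rw [e] at h
      rw [ih] at h
      linarith [h]

/-- `(-d)/n = -(d/n) - 1` when `n ∤ d`, `0 < n`. -/
lemma neg_ediv {n d : ℤ} (hn : 0 < n) (hnd : ¬ n ∣ d) :
    (-d) / n = -(d / n) - 1 := by
  have hmod := Int.mul_ediv_add_emod d n
  have hr0 : 0 ≤ d % n := Int.emod_nonneg d (by omega)
  have hrn : d % n < n := Int.emod_lt_of_pos d hn
  have hrne : d % n ≠ 0 := by
    intro h
    exact hnd (Int.dvd_of_emod_eq_zero h)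
  have e : -d = (n - d % n) + (-(d / n) - 1) * n := by linarith
  rw [e, Int.add_mul_ediv_right _ _ (by omega : n ≠ 0),
    Int.ediv_eq_zero_of_lt (by omega) (by omega)]
  ring

end Stmt14Aux

/-- The number of affine inversions of ω, i.e. of pairs (a,b) ∈ [n] × ℕ with
a < b and ω(a) > ω(b), equals ∑_{i<j} k_{i,j}(ω), where
k_{i,j}(ω) = |⌊(ω⁻¹(j) − ω⁻¹(i))/n⌋|. -/
theorem stmt14 (n : ℕ) (hn : 0 < n) (ω : AffinePerm n) (winv : ℤ → ℤ)
    (h1 : Function.LeftInverse winv ω.toFun)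
    (h2 : Function.RightInverse winv ω.toFun) :
    Set.ncard {ab : ℤ × ℤ | 1 ≤ ab.1 ∧ ab.1 ≤ (n : ℤ) ∧ ab.1 < ab.2 ∧
        ω.toFun ab.2 < ω.toFun ab.1}
      = ∑ i ∈ Finset.Icc (1 : ℤ) (n : ℤ), ∑ j ∈ Finset.Icc (1 : ℤ) (n : ℤ),
          if i < j then ((winv j - winv i) / (n : ℤ)).natAbs else 0 := by
  set σ := winv with hσ
  have hn' : (0 : ℤ) < n := by exact_mod_cast hn
  have hne : (n : ℤ) ≠ 0 := by omega
  -- basic shift facts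
  have wshift : ∀ t k : ℤ, ω.toFun (t + k * n) = ω.toFun t + k * n :=
    Stmt14Aux.shiftk ω
  have σshift : ∀ t k : ℤ, σ (t + k * n) = σ t + k * n := by
    intro t k
    apply h1.injective
    rw [h2, wshift, h2]
  -- injectivity mod n
  have key_dvd : ∀ x ∈ Finset.Icc (1 : ℤ) (n : ℤ), ∀ y ∈ Finset.Icc (1 : ℤ) (n : ℤ),
      (n : ℤ) ∣ (σ x - σ y) → x = y := by
    intro x hx y hy ⟨k, hk⟩
    simp only [Finset.mem_Icc] at hx hy
    have hσx : σ x = σ y + k * n := by linarith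
    have : x = y + k * n := by
      have := h2 x
      rw [hσx, wshift, h2] at this
      omega
    have hdvd : (n : ℤ) ∣ (x - y) := ⟨k, by linarith⟩
    have : x - y = 0 := Int.eq_zero_of_abs_lt_dvd hdvd (by rw [abs_lt]; omega)
    omega
  -- definitions
  set q : ℤ → ℤ := fun x => (σ x - 1) / n with hq
  set A : ℤ → ℤ := fun x => (σ x - 1) % n + 1 with hA
  have hA_eq : ∀ x, A x = σ x + (-(q x)) * n := by
    intro x
    have := Int.mul_ediv_add_emod (σ x - 1) n
    simp only [hA, hq]
    linarith
  have hA_mem : ∀ x, 1 ≤ A x ∧ A x ≤ n := by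
    intro x
    have h0 := Int.emod_nonneg (σ x - 1) hne
    have h1' := Int.emod_lt_of_pos (σ x - 1) hn'
    simp only [hA]; omega
  have hωA : ∀ x, ω.toFun (A x) = x + (A x - σ x) := by
    intro x
    rw [hA_eq x, wshift, h2]
    ring_nf
  set lo : ℤ → ℤ → ℤ := fun x y => (A x - σ y) / n + 1 with hlo
  set hi : ℤ → ℤ → ℤ := fun x y => ((x - y) + (A x - σ x)) / n + 1 with hhi
  set T : Finset (ℤ × ℤ) :=
    (Finset.Icc (1 : ℤ) (n : ℤ) ×ˢ Finset.Icc (1 : ℤ) (n : ℤ)).biUnion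
      (fun p => (Finset.Ico (lo p.1 p.2) (hi p.1 p.2)).image
        (fun m => (A p.1, σ p.2 + m * n))) with hT
  -- divide-out identities
  have hhi_eq : ∀ x y, hi x y = (x - y) / n - q x + 1 := by
    intro x y
    have : (x - y) + (A x - σ x) = (x - y) + (-(q x)) * n := by
      have := hA_eq x; linarith
    simp only [hhi, this, Int.add_mul_ediv_right _ _ hne]
    ring
  have hlo_eq : ∀ x y, lo x y = (σ x - σ y) / n - q x + 1 := by
    intro x y
    have : A x - σ y = (σ x - σ y) + (-(q x)) * n := by
      have := hA_eq x; linarith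
    simp only [hlo, this, Int.add_mul_ediv_right _ _ hne]
    ring
  -- main set equality
  have hset : {ab : ℤ × ℤ | 1 ≤ ab.1 ∧ ab.1 ≤ (n : ℤ) ∧ ab.1 < ab.2 ∧
        ω.toFun ab.2 < ω.toFun ab.1} = ↑T := by
    ext ⟨a, b⟩
    rw [Set.mem_setOf_eq, Finset.mem_coe, hT, Finset.mem_biUnion]
    simp only [Finset.mem_product, Finset.mem_image, Finset.mem_Ico,
      Finset.mem_Icc, Prod.exists]
    constructor
    · rintro ⟨ha1, ha2, hab, hω⟩
      set x : ℤ := (ω.toFun a - 1) % n + 1 with hx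
      set y : ℤ := (ω.toFun b - 1) % n + 1 with hy
      set k : ℤ := (ω.toFun a - 1) / n with hk
      set m : ℤ := (ω.toFun b - 1) / n with hm
      have hxa : ω.toFun a = x + k * n := by
        have := Int.mul_ediv_add_emod (ω.toFun a - 1) n
        simp only [hx, hk]; linarith
      have hyb : ω.toFun b = y + m * n := by
        have := Int.mul_ediv_add_emod (ω.toFun b - 1) n
        simp only [hy, hm]; linarith
      have hxmem : 1 ≤ x ∧ x ≤ n := by
        have h0 := Int.emod_nonneg (ω.toFun a - 1) hne
        have h1' := Int.emod_lt_of_pos (ω.toFun a - 1) hn'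
        simp only [hx]; omega
      have hymem : 1 ≤ y ∧ y ≤ n := by
        have h0 := Int.emod_nonneg (ω.toFun b - 1) hne
        have h1' := Int.emod_lt_of_pos (ω.toFun b - 1) hn'
        simp only [hy]; omega
      -- σ x = a - k * n
      have hσx : σ x = a - k * n := by
        have : x = ω.toFun a + (-k) * n := by linarith
        rw [this]
        have := σshift (ω.toFun a) (-k)
        rw [this, h1]
        ring
      have hσy : σ y = b - m * n := by
        have : y = ω.toFun b + (-m) * n := by linarith
        rw [this]
        have := σshift (ω.toFun b) (-m)
        rw [this, h1]
        ring
      have hAx : A x = a := by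
        simp only [hA, hσx]
        have : a - k * n - 1 = (a - 1) + (-k) * n := by ring
        rw [this, Int.add_mul_emod_self_right, Int.emod_eq_of_lt (by omega) (by omega)]
        omega
      refine ⟨x, y, ⟨⟨hxmem.1, hxmem.2⟩, hymem.1, hymem.2⟩, m, ⟨?_, ?_⟩, ?_⟩
      · -- lo x y ≤ m
        have hlt : A x - σ y < m * n := by rw [hAx, hσy]; linarith
        have : (A x - σ y) / n < m := (Int.ediv_lt_iff_lt_mul hn').mpr
          (by linarith [hlt])
        simp only [hlo]; omega
      · -- m < hi x y
        have hωAx : ω.toFun (A x) = ω.toFun a := by rw [hAx]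
        have hU : m * n < (x - y) + (A x - σ x) := by
          have h3 := hωA x
          rw [hAx] at h3
          -- ω a = x + (a - σ x);  ω b = y + m n < ω a
          have : y + m * n < x + (a - σ x) := by rw [← hyb, ← h3]; exact hω
          have h4 : A x - σ x = a - σ x := by rw [hAx]
          omega
        have : m ≤ ((x - y) + (A x - σ x)) / n :=
          (Int.le_ediv_iff_mul_le hn').mpr (le_of_lt hU)
        simp only [hhi]; omega
      · rw [hAx, hσy]
        simp
    · rintro ⟨x, y, ⟨⟨hx1, hx2⟩, hy1, hy2⟩, m, ⟨hmlo, hmhi⟩, heq⟩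
      obtain ⟨ha, hb⟩ : A x = a ∧ σ y + m * n = b := ⟨congrArg Prod.fst heq, congrArg Prod.snd heq⟩
      have hxy : x ≠ y := by
        intro h
        subst h
        have l1 := hlo_eq x x
        have l2 := hhi_eq x x
        simp only [sub_self, Int.zero_ediv] at l1 l2
        rw [l1] at hmlo
        rw [l2] at hmhi
        omega
      have hndvd : ¬ (n : ℤ) ∣ ((x - y) + (A x - σ x)) := by
        intro hdvd
        have h4 := hA_eq x
        have : (n : ℤ) ∣ (x - y) := by
          obtain ⟨c, hc⟩ := hdvd
          exact ⟨c + q x, by linarith⟩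
        have : x - y = 0 := Int.eq_zero_of_abs_lt_dvd this (by rw [abs_lt]; omega)
        omega
      have hA1 := (hA_mem x).1
      have hA2 := (hA_mem x).2
      refine ⟨by omega, by omega, ?_, ?_⟩
      · -- a < b
        have : (A x - σ y) / n < m := by simp only [hlo] at hmlo; omega
        have := (Int.ediv_lt_iff_lt_mul hn').mp this
        omega
      · -- ω b < ω a
        have hmle : m ≤ ((x - y) + (A x - σ x)) / n := by simp only [hhi] at hmhi; omega
        have h5 : m * n ≤ (x - y) + (A x - σ x) := (Int.le_ediv_iff_mul_le hn').mp hmle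
        have h6 : m * n ≠ (x - y) + (A x - σ x) := by
          intro h
          exact hndvd ⟨m, by linarith⟩
        have hωb : ω.toFun b = y + m * n := by
          rw [← hb, wshift, h2]
        have hωa : ω.toFun a = x + (A x - σ x) := by
          rw [← ha, hωA]
        omega
  rw [hset, Set.ncard_coe_finset]
  -- card computation
  have hdisj : ∀ p₁ ∈ (Finset.Icc (1 : ℤ) (n : ℤ) ×ˢ Finset.Icc (1 : ℤ) (n : ℤ)),
      ∀ p₂ ∈ (Finset.Icc (1 : ℤ) (n : ℤ) ×ˢ Finset.Icc (1 : ℤ) (n : ℤ)), p₁ ≠ p₂ →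
      Disjoint ((Finset.Ico (lo p₁.1 p₁.2) (hi p₁.1 p₁.2)).image
        (fun m => (A p₁.1, σ p₁.2 + m * n)))
        ((Finset.Ico (lo p₂.1 p₂.2) (hi p₂.1 p₂.2)).image
        (fun m => (A p₂.1, σ p₂.2 + m * n))) := by
    rintro ⟨x₁, y₁⟩ hp₁ ⟨x₂, y₂⟩ hp₂ hne'
    simp only [Finset.mem_product, Finset.mem_Icc] at hp₁ hp₂
    rw [Finset.disjoint_left]
    rintro ⟨a, b⟩ hab₁ hab₂
    simp only [Finset.mem_image, Finset.mem_Ico, Prod.mk.injEq] at hab₁ hab₂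
    obtain ⟨m₁, _, ha₁, hb₁⟩ := hab₁
    obtain ⟨m₂, _, ha₂, hb₂⟩ := hab₂
    have hx : x₁ = x₂ := by
      apply key_dvd x₁ (by simp [Finset.mem_Icc]; omega) x₂ (by simp [Finset.mem_Icc]; omega)
      have e1 := hA_eq x₁
      have e2 := hA_eq x₂
      exact ⟨q x₁ - q x₂, by linarith⟩
    have hy : y₁ = y₂ := by
      apply key_dvd y₁ (by simp [Finset.mem_Icc]; omega) y₂ (by simp [Finset.mem_Icc]; omega)
      exact ⟨m₂ - m₁, by linarith⟩
    exact hne' (by rw [hx, hy])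
  rw [Finset.card_biUnion hdisj]
  have hcard : ∀ p ∈ (Finset.Icc (1 : ℤ) (n : ℤ) ×ˢ Finset.Icc (1 : ℤ) (n : ℤ)),
      ((Finset.Ico (lo p.1 p.2) (hi p.1 p.2)).image
        (fun m => (A p.1, σ p.2 + m * n))).card
      = (hi p.1 p.2 - lo p.1 p.2).toNat := by
    intro p _
    rw [Finset.card_image_of_injective _ (by
      intro m₁ m₂ h
      have := congrArg Prod.snd h
      simp only at this
      have : m₁ * (n : ℤ) = m₂ * n := by omega
      exact mul_right_cancel₀ hne this), Int.card_Ico]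
  rw [Finset.sum_congr rfl hcard, Finset.sum_product]
  -- now: ∑ x ∑ y, (hi x y - lo x y).toNat = ∑ i ∑ j, if i < j then ...
  set f : ℤ → ℤ → ℕ := fun x y => (hi x y - lo x y).toNat with hf
  have hdiag : ∀ x, f x x = 0 := by
    intro x
    simp only [hf, hhi_eq, hlo_eq, sub_self, Int.zero_ediv]
    omega
  have hkey : ∀ x ∈ Finset.Icc (1 : ℤ) (n : ℤ), ∀ y ∈ Finset.Icc (1 : ℤ) (n : ℤ),
      x < y → f x y + f y x = ((σ y - σ x) / n).natAbs := by
    intro x hx y hy hxy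
    simp only [Finset.mem_Icc] at hx hy
    have hndvd : ¬ (n : ℤ) ∣ (σ y - σ x) := by
      intro hdvd
      have : y = x := key_dvd y (by simp [Finset.mem_Icc]; omega)
        x (by simp [Finset.mem_Icc]; omega) hdvd
      omega
    have e1 : (x - y) / (n : ℤ) = -1 := by
      have h0 : -(n : ℤ) ≤ x - y := by omega
      have h1' : x - y < 0 := by omega
      have hle : (x - y) / (n : ℤ) ≤ -1 := by
        have : (x - y) / (n : ℤ) < 0 := Int.ediv_neg_of_neg_of_pos h1' hn'
        omega
      have hge : (-1 : ℤ) ≤ (x - y) / (n : ℤ) :=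
        (Int.le_ediv_iff_mul_le hn').mpr (by linarith)
      omega
    have e2 : (y - x) / (n : ℤ) = 0 := Int.ediv_eq_zero_of_lt (by omega) (by omega)
    have e3 : (σ x - σ y) / (n : ℤ) = -((σ y - σ x) / n) - 1 := by
      have := Stmt14Aux.neg_ediv hn' hndvd
      rw [← this]; congr 1; ring
    simp only [hf, hhi_eq, hlo_eq, e1, e2, e3]
    omega
  -- symmetrize
  have split : ∀ x ∈ Finset.Icc (1 : ℤ) (n : ℤ), ∀ y ∈ Finset.Icc (1 : ℤ) (n : ℤ),
      f x y = (if x < y then f x y else 0) + (if y < x then f x y else 0) := by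
    intro x _ y _
    rcases lt_trichotomy x y with h | h | h
    · simp [h, not_lt_of_gt h]
    · subst h; simp [hdiag]
    · simp [h, not_lt_of_gt h]
  calc ∑ x ∈ Finset.Icc (1 : ℤ) (n : ℤ), ∑ y ∈ Finset.Icc (1 : ℤ) (n : ℤ), f x y
      = ∑ x ∈ Finset.Icc (1 : ℤ) (n : ℤ), ∑ y ∈ Finset.Icc (1 : ℤ) (n : ℤ),
          ((if x < y then f x y else 0) + (if y < x then f x y else 0)) := by
        refine Finset.sum_congr rfl fun x hx => Finset.sum_congr rfl fun y hy => ?_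
        exact split x hx y hy
    _ = (∑ x ∈ Finset.Icc (1 : ℤ) (n : ℤ), ∑ y ∈ Finset.Icc (1 : ℤ) (n : ℤ),
          if x < y then f x y else 0)
        + ∑ x ∈ Finset.Icc (1 : ℤ) (n : ℤ), ∑ y ∈ Finset.Icc (1 : ℤ) (n : ℤ),
          if y < x then f x y else 0 := by
        rw [← Finset.sum_add_distrib]
        exact Finset.sum_congr rfl fun x _ => Finset.sum_add_distrib
    _ = (∑ x ∈ Finset.Icc (1 : ℤ) (n : ℤ), ∑ y ∈ Finset.Icc (1 : ℤ) (n : ℤ),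
          if x < y then f x y else 0)
        + ∑ x ∈ Finset.Icc (1 : ℤ) (n : ℤ), ∑ y ∈ Finset.Icc (1 : ℤ) (n : ℤ),
          if x < y then f y x else 0 := by
        congr 1
        exact Finset.sum_comm
    _ = ∑ x ∈ Finset.Icc (1 : ℤ) (n : ℤ), ∑ y ∈ Finset.Icc (1 : ℤ) (n : ℤ),
          if x < y then f x y + f y x else 0 := by
        rw [← Finset.sum_add_distrib]
        refine Finset.sum_congr rfl fun x _ => ?_
        rw [← Finset.sum_add_distrib]
        refine Finset.sum_congr rfl fun y _ => ?_
        split <;> simp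
    _ = ∑ i ∈ Finset.Icc (1 : ℤ) (n : ℤ), ∑ j ∈ Finset.Icc (1 : ℤ) (n : ℤ),
          if i < j then ((σ j - σ i) / (n : ℤ)).natAbs else 0 := by
        refine Finset.sum_congr rfl fun x hx => Finset.sum_congr rfl fun y hy => ?_
        split
        · exact hkey x hx y hy (by assumption)
        · rfl
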